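/- The twist map T(x, y) = (x, x + y mod 1) on [0,1] × S¹ with the product of Lebesgue measures is not partially measure-theoretically rigid: for every α > 0 there exists a measurable set A of positive measure such that μ(T^{-n}A ∩ A) < α μ(A) for all sufficiently large n. -/

import Mathlib

open MeasureTheory Filter Topology

/-- The twist map on `[0,1] × ℝ/ℤ`. -/
noncomputable def twist (p : Set.Icc (0:ℝ) 1 × AddCircle (1:ℝ)) :
    Set.Icc (0:ℝ) 1 × AddCircle (1:ℝ) :=
  (p.1, ((p.1 : ℝ) : AddCircle (1:ℝ)) + p.2)

noncomputable def cmap (x : Set.Icc (0:ℝ) 1) : AddCircle (1:ℝ) := ((x : ℝ) : AddCircle (1:ℝ))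

lemma mp_cmap : MeasurePreserving cmap volume volume := by
  have h0 : MeasurePreserving (Subtype.val : Set.Icc (0:ℝ) 1 → ℝ) volume
      (volume.restrict (Set.Icc 0 1)) :=
    ⟨measurable_subtype_coe, map_comap_subtype_coe measurableSet_Icc _⟩
  have h1 : (volume.restrict (Set.Icc (0:ℝ) 1)) = volume.restrict (Set.Ioc 0 1) :=
    (Measure.restrict_congr_set Ioc_ae_eq_Icc).symm
  have h2 : MeasurePreserving ((↑) : ℝ → AddCircle (1:ℝ))
      (volume.restrict (Set.Ioc 0 1)) volume := by
    have := AddCircle.measurePreserving_mk (1:ℝ) 0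
    simpa using this
  rw [h1] at h0
  exact h2.comp h0

lemma mp_smul (n : ℕ) (hn : n ≠ 0) :
    MeasurePreserving (fun x : Set.Icc (0:ℝ) 1 => n • cmap x) volume volume := by
  have h : MeasurePreserving (fun y : AddCircle (1:ℝ) => (n:ℤ) • y) volume volume :=
    Measure.measurePreserving_zsmul volume (by exact_mod_cast hn)
  simpa [natCast_zsmul, Function.comp_def] using h.comp mp_cmap

lemma twist_iter (n : ℕ) (p : Set.Icc (0:ℝ) 1 × AddCircle (1:ℝ)) :
    twist^[n] p = (p.1, n • cmap p.1 + p.2) := by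
  induction n with
  | zero => simp
  | succ n ih =>
    rw [Function.iterate_succ_apply', ih, twist]
    simp only [succ_nsmul, cmap]
    refine Prod.ext rfl ?_
    abel_nf

lemma meas_S (n : ℕ) (J : Set (AddCircle (1:ℝ))) (hJ : MeasurableSet J) :
    MeasurableSet {p : Set.Icc (0:ℝ) 1 × AddCircle (1:ℝ) |
      n • cmap p.1 + p.2 ∈ J ∧ p.2 ∈ J} := by
  have hc : Continuous fun p : Set.Icc (0:ℝ) 1 × AddCircle (1:ℝ) => n • cmap p.1 + p.2 := by
    exact ((AddCircle.continuous_mk' 1).comp continuous_subtype_val |>.comp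
      continuous_fst |>.nsmul n).add continuous_snd
  exact (hc.measurable hJ).inter (measurable_snd hJ)

lemma key (n : ℕ) (hn : n ≠ 0) (J : Set (AddCircle (1:ℝ))) (hJ : MeasurableSet J) :
    volume {p : Set.Icc (0:ℝ) 1 × AddCircle (1:ℝ) | n • cmap p.1 + p.2 ∈ J ∧ p.2 ∈ J}
      = volume J * volume J := by
  rw [Measure.volume_eq_prod, Measure.prod_apply_symm (meas_S n J hJ)]
  have hfiber : ∀ y : AddCircle (1:ℝ),
      volume ((fun x : Set.Icc (0:ℝ) 1 => (x, y)) ⁻¹' {p : Set.Icc (0:ℝ) 1 × AddCircle (1:ℝ) |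
        n • cmap p.1 + p.2 ∈ J ∧ p.2 ∈ J}) = J.indicator (fun _ => volume J) y := by
    intro y
    by_cases hy : y ∈ J
    · have : ((fun x : Set.Icc (0:ℝ) 1 => (x, y)) ⁻¹' {p : Set.Icc (0:ℝ) 1 × AddCircle (1:ℝ) |
          n • cmap p.1 + p.2 ∈ J ∧ p.2 ∈ J})
          = (fun x : Set.Icc (0:ℝ) 1 => n • cmap x) ⁻¹' ((· + y) ⁻¹' J) := by
        ext x; simp [hy]
      rw [this, (mp_smul n hn).measure_preimage
          ((hJ.preimage (measurable_add_const y)).nullMeasurableSet)]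
      rw [Set.indicator_of_mem hy]
      exact measure_preimage_add_right volume y J
    · have : ((fun x : Set.Icc (0:ℝ) 1 => (x, y)) ⁻¹' {p : Set.Icc (0:ℝ) 1 × AddCircle (1:ℝ) |
          n • cmap p.1 + p.2 ∈ J ∧ p.2 ∈ J}) = ∅ := by
        ext x; simp [hy]
      rw [this, Set.indicator_of_notMem hy]; simp
  simp_rw [hfiber]
  rw [lintegral_indicator hJ]
  simp [mul_comm]

theorem stmt_8 :
    ∀ α : ℝ, 0 < α → ∃ A : Set (Set.Icc (0:ℝ) 1 × AddCircle (1:ℝ)),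
      MeasurableSet A ∧ 0 < volume A ∧
      ∃ N : ℕ, ∀ n ≥ N, volume (twist^[n] ⁻¹' A ∩ A) < ENNReal.ofReal α * volume A := by
  intro α hα
  set ε : ℝ := min α 1 / 2 with hεdef
  have hε0 : 0 < ε := by positivity
  have hεα : ε < α := by
    have h1 : min α 1 ≤ α := min_le_left _ _
    have : ε < min α 1 := by
      rw [hεdef]; linarith [lt_min hα one_pos]
    linarith
  have hε1 : ε ≤ 1 := by
    have : min α 1 ≤ 1 := min_le_right _ _
    rw [hεdef]; linarith
  set J : Set (AddCircle (1:ℝ)) := Metric.closedBall (0 : AddCircle (1:ℝ)) (ε/2) with hJdef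
  have hJm : MeasurableSet J := Metric.isClosed_closedBall.measurableSet
  have hJvol : volume J = ENNReal.ofReal ε := by
    rw [hJdef, AddCircle.volume_closedBall]
    congr 1
    rw [mul_div_cancel₀ _ (two_ne_zero)]
    exact min_eq_right hε1
  refine ⟨Set.univ ×ˢ J, MeasurableSet.univ.prod hJm, ?_, 1, ?_⟩
  · have : volume (Set.univ ×ˢ J : Set (Set.Icc (0:ℝ) 1 × AddCircle (1:ℝ)))
        = volume (Set.univ : Set (Set.Icc (0:ℝ) 1)) * volume J := by
      rw [Measure.volume_eq_prod, Measure.prod_prod]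
    rw [this, measure_univ, one_mul, hJvol]
    exact ENNReal.ofReal_pos.mpr hε0
  · intro n hn
    have hset : twist^[n] ⁻¹' (Set.univ ×ˢ J) ∩ (Set.univ ×ˢ J)
        = {p : Set.Icc (0:ℝ) 1 × AddCircle (1:ℝ) | n • cmap p.1 + p.2 ∈ J ∧ p.2 ∈ J} := by
      ext p
      simp [twist_iter, Set.mem_prod, cmap]
    have hvolA : volume (Set.univ ×ˢ J : Set (Set.Icc (0:ℝ) 1 × AddCircle (1:ℝ)))
        = ENNReal.ofReal ε := by
      rw [Measure.volume_eq_prod, Measure.prod_prod, measure_univ, one_mul, hJvol]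
    rw [hset, key n (by omega) J hJm, hJvol, hvolA]
    refine ENNReal.mul_lt_mul_iff_left (by simpa using hε0) ENNReal.ofReal_ne_top |>.mpr ?_
    exact ENNReal.ofReal_lt_ofReal_iff_of_nonneg hε0.le |>.mpr hεα
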